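/- Let f be a nonzero homogeneous Darboux polynomial of degree m of the three-dimensional Lotka–Volterra system with cofactor α·x1 + β·x2 + γ·x3. Then either γ = 0, or γ = γ1·s + γ2·t for some non-negative integers γ1, γ2 with 1 ≤ γ1 + γ2 ≤ m. -/

import Mathlib

open MvPolynomial

/-- The Euler operator `X i * ∂ i` multiplies each monomial by its `i`-exponent. -/
lemma euler_coeff (i : Fin 3) (f : MvPolynomial (Fin 3) ℝ) (μ : Fin 3 →₀ ℕ) :
    coeff μ (X i * pderiv i f) = (μ i : ℝ) * coeff μ f := by
  induction f using MvPolynomial.induction_on' with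
  | add p q hp hq =>
    simp only [map_add, mul_add, coeff_add, hp, hq]
  | monomial s a =>
    rw [pderiv_monomial]
    by_cases h : s i = 0
    · rw [h]
      simp only [Nat.cast_zero, MulZeroClass.mul_zero, monomial_zero, MulZeroClass.mul_zero,
        coeff_zero, coeff_monomial]
      split_ifs with hs
      · subst hs; rw [h]; simp
      · simp
    · have hle : Finsupp.single i 1 ≤ s := by
        rw [Finsupp.single_le_iff]; omega
      have hX : (X i : MvPolynomial (Fin 3) ℝ) * monomial (s - Finsupp.single i 1) (a * s i)
          = monomial s (a * s i) := by
        rw [X, monomial_mul, add_tsub_cancel_of_le hle, one_mul]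
      rw [hX, coeff_monomial, coeff_monomial]
      split_ifs with hs
      · subst hs; ring
      · simp

/-- Lie derivative along the 3D Lotka-Volterra vector field with parameters r, s, t. -/
noncomputable def LV (r s t : ℝ) (f : MvPolynomial (Fin 3) ℝ) : MvPolynomial (Fin 3) ℝ :=
  X 0 * (C r * X 1 + C s * X 2) * pderiv 0 f
  + X 1 * (C (-r) * X 0 + C t * X 2) * pderiv 1 f
  + X 2 * (C (-s) * X 0 + C (-t) * X 1) * pderiv 2 f
theorem stmt11 (r s t : ℝ) (m : ℕ) (f : MvPolynomial (Fin 3) ℝ)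
    (hf : f ≠ 0) (hhom : f.IsHomogeneous m) (α β γ : ℝ)
    (hD : LV r s t f = (C α * X 0 + C β * X 1 + C γ * X 2) * f) :
    γ = 0 ∨ ∃ γ1 γ2 : ℕ, γ = γ1 * s + γ2 * t ∧ 1 ≤ γ1 + γ2 ∧ γ1 + γ2 ≤ m := by
  classical
  -- pick a monomial of `f` with maximal exponent of `x₃`
  obtain ⟨d, hd, hmax⟩ := Finset.exists_max_image f.support (fun v => v 2)
    (MvPolynomial.support_nonempty.mpr hf)
  have hc : coeff d f ≠ 0 := MvPolynomial.mem_support_iff.mp hd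
  have hz : ∀ ν : Fin 3 →₀ ℕ, d 2 < ν 2 → coeff ν f = 0 := by
    intro ν hν
    by_contra h
    exact absurd (hmax ν (MvPolynomial.mem_support_iff.mpr h)) (not_le.mpr hν)
  set μ : Fin 3 →₀ ℕ := d + Finsupp.single 2 1 with hμ
  set g0 : MvPolynomial (Fin 3) ℝ := X 0 * pderiv 0 f with hg0
  set g1 : MvPolynomial (Fin 3) ℝ := X 1 * pderiv 1 f with hg1
  set g2 : MvPolynomial (Fin 3) ℝ := X 2 * pderiv 2 f with hg2
  have e1 : LV r s t f
      = C r * (X 1 * g0) + C s * (X 2 * g0)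
      + (C (-r) * (X 0 * g1) + C t * (X 2 * g1))
      + (C (-s) * (X 0 * g2) + C (-t) * (X 1 * g2)) := by
    rw [hg0, hg1, hg2]; unfold LV; ring
  have e2 : (C α * X 0 + C β * X 1 + C γ * X 2) * f
      = C α * (X 0 * f) + C β * (X 1 * f) + C γ * (X 2 * f) := by ring
  have key := congrArg (coeff μ) (e1.symm.trans (hD.trans e2))
  have hμ0 : μ 0 = d 0 := by simp [hμ, Finsupp.single_apply]
  have hμ1 : μ 1 = d 1 := by simp [hμ, Finsupp.single_apply]
  have hμ2 : μ 2 = d 2 + 1 := by simp [hμ]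
  have hsub2 : μ - Finsupp.single 2 1 = d := by
    rw [hμ, add_tsub_cancel_right]
  -- coefficients obtained by shifting down in x₁ or x₂ vanish: x₃-degree exceeds d 2
  have hz0 : coeff (μ - Finsupp.single 0 1) f = 0 := by
    apply hz
    have h2 := Finsupp.tsub_apply μ (Finsupp.single (0 : Fin 3) (1 : ℕ)) 2
    rw [h2, Finsupp.single_apply]
    simp only [show ((0 : Fin 3) = 2) = False by simp, if_false, Nat.sub_zero]
    omega
  have hz1 : coeff (μ - Finsupp.single 1 1) f = 0 := by
    apply hz
    have h2 := Finsupp.tsub_apply μ (Finsupp.single (1 : Fin 3) (1 : ℕ)) 2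
    rw [h2, Finsupp.single_apply]
    simp only [show ((1 : Fin 3) = 2) = False by simp, if_false, Nat.sub_zero]
    omega
  have hA : coeff (μ - Finsupp.single 1 1) g0 = 0 := by
    rw [hg0, euler_coeff, hz1, MulZeroClass.mul_zero]
  have hB : coeff d g0 = (d 0 : ℝ) * coeff d f := by
    rw [hg0, euler_coeff]
  have hC : coeff (μ - Finsupp.single 0 1) g1 = 0 := by
    rw [hg1, euler_coeff, hz0, MulZeroClass.mul_zero]
  have hE : coeff d g1 = (d 1 : ℝ) * coeff d f := by
    rw [hg1, euler_coeff]
  have hF : coeff (μ - Finsupp.single 0 1) g2 = 0 := by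
    rw [hg2, euler_coeff, hz0, MulZeroClass.mul_zero]
  have hG : coeff (μ - Finsupp.single 1 1) g2 = 0 := by
    rw [hg2, euler_coeff, hz1, MulZeroClass.mul_zero]
  have h2mem : (2 : Fin 3) ∈ μ.support := by
    rw [Finsupp.mem_support_iff]; omega
  simp only [coeff_add, coeff_C_mul, coeff_X_mul'] at key
  rw [if_pos h2mem, if_pos h2mem, if_pos h2mem] at key
  simp only [hsub2, hA, hB, hC, hE, hF, hG, hz0, hz1, MulZeroClass.mul_zero, ite_self,
    add_zero, zero_add] at key
  -- key : r * (...0) + s * (d0 * c) + (-r * 0 + t * (d1 * c)) + ... = ... + γ * c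
  have hkey : ((d 0 : ℝ) * s + (d 1 : ℝ) * t) * coeff d f = γ * coeff d f := by
    linarith [key]
  have hγ : γ = (d 0 : ℝ) * s + (d 1 : ℝ) * t := (mul_right_cancel₀ hc hkey).symm
  -- degree count
  have hdeg : d 0 + d 1 + d 2 = m := by
    have := hhom hc
    simpa [Finsupp.weight_apply, Finsupp.sum_fintype, Fin.sum_univ_three] using this
  by_cases hsum : d 0 + d 1 = 0
  · left
    have h0 : d 0 = 0 := by omega
    have h1 : d 1 = 0 := by omega
    rw [hγ, h0, h1]; simp
  · right
    exact ⟨d 0, d 1, hγ, by omega, by omega⟩
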